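/- (Determinant of the basic resolvent vanishes, coefficient form.) For every commutative ring R, every family w : ℤ → R, every integer j ≥ 1 and every n ∈ ℤ, the quadratic identity m_{j,-2}(n) = Σ_{i=0}^{j-1} ( w_n w_{n-1} m_{i,0}(n) m_{j-1-i,0}(n−2) − m_{i,-2}(n) m_{j-1-i,-2}(n) ) holds. -/

import Mathlib

/-- Coefficients `m_{j,k}(n)` of the powers `L^j = Σ_k m_{j,k}(n) Λ^k` of the
difference operator `L = Λ² + (w_{n+1} + w_n) + w_n w_{n-1} Λ⁻²`,
defined by the recursion from the context (natural-number power index). -/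
def mAux {R : Type*} [CommRing R] (w : ℤ → R) : ℕ → ℤ → ℤ → R
  | 0, k, _ => if k = 0 then 1 else 0
  | j + 1, k, n =>
      mAux w j (k - 2) n + (w (n + k + 1) + w (n + k)) * mAux w j k n +
        w (n + k + 2) * w (n + k + 1) * mAux w j (k + 2) n

/-- `mCoef w j k n` is `m_{j,k}(n)` for an integer `j` (meaningful for `j ≥ 0`). -/
def mCoef {R : Type*} [CommRing R] (w : ℤ → R) (j k n : ℤ) : R := mAux w j.toNat k n

def wprod {R : Type*} [CommRing R] (w : ℤ → R) : ℕ → ℤ → R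
  | 0, _ => 1
  | u + 1, n => wprod w u n * w (n - u)

section
variable {R : Type*} [CommRing R] (w : ℤ → R)

lemma mAux_succ (j : ℕ) (k n : ℤ) :
    mAux w (j+1) k n = mAux w j (k-2) n + (w (n+k+1) + w (n+k)) * mAux w j k n +
      w (n+k+2) * w (n+k+1) * mAux w j (k+2) n := rfl

lemma mAux_left (j : ℕ) (k n : ℤ) :
    mAux w (j+1) k n = mAux w j (k-2) (n+2) + (w (n+1) + w n) * mAux w j k n +
      w n * w (n-1) * mAux w j (k+2) (n-2) := by
  induction j generalizing k n with
  | zero =>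
      by_cases h2 : k = 2 <;> by_cases h0 : k = 0 <;> by_cases hm : k = -2 <;>
        simp_all [mAux] <;> ring_nf <;> split_ifs <;> simp_all <;> omega
  | succ j ih =>
      conv_rhs => rw [mAux_succ w j (k-2) (n+2), mAux_succ w j k n, mAux_succ w j (k+2) (n-2)]
      rw [mAux_succ w (j+1) k n, ih (k-2) n, ih k n, ih (k+2) n]
      ring_nf

lemma wprod_step (e : ℕ) (n : ℤ) :
    wprod w (2*(e+1)) n = wprod w (2*e) n * (w (n - 2*e) * w (n - (2*(e:ℤ)+1))) := by
  have h : 2*(e+1) = (2*e) + 1 + 1 := by ring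
  rw [h]
  show wprod w (2*e+1) n * w (n - (2*e+1 : ℕ)) = _
  show wprod w (2*e) n * w (n - (2*e : ℕ)) * w (n - (2*e+1 : ℕ)) = _
  push_cast
  ring

lemma mAux_transpose (l : ℕ) : ∀ (d : ℕ) (n : ℤ),
    mAux w l (-(2*(d:ℤ))) n = wprod w (2*d) n * mAux w l (2*(d:ℤ)) (n - 2*d) := by
  induction l with
  | zero =>
      intro d n
      rcases d with _ | e
      · simp [mAux, wprod]
      · simp only [mAux]
        have h1 : ¬(-(2*(((e+1:ℕ)):ℤ)) = 0) := by push_cast; omega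
        have h2 : ¬((2*(((e+1:ℕ)):ℤ)) = 0) := by push_cast; omega
        rw [if_neg h1, if_neg h2, mul_zero]
  | succ l ih =>
      intro d n
      rcases d with _ | e
      · norm_num [mAux_succ, wprod]
      · have i0 := ih e n
        have i1 := ih (e+1) n
        have i2 := ih (e+2) n
        rw [wprod_step] at i1
        rw [wprod_step, wprod_step] at i2
        have hR := mAux_left w l (2*((e:ℤ)+1)) (n - 2*((e:ℕ)+1))
        rw [wprod_step]
        push_cast at i0 i1 i2 hR ⊢
        rw [mAux_succ]
        rw [hR]
        ring_nf at i0 i1 i2 ⊢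
        rw [i0, i1, i2]
        ring

lemma mAux_d1 (l : ℕ) (n : ℤ) :
    mAux w l (-2) n = w n * w (n - 1) * mAux w l 2 (n - 2) := by
  have h := mAux_transpose w l 1 n
  norm_num [wprod] at h
  convert h using 2 <;> ring

lemma refl0 (j : ℕ) (n : ℤ) :
    ∑ i ∈ Finset.range j, (w n * w (n-1) * mAux w i 0 n * mAux w (j-1-i) 2 (n-2)
      - mAux w i (-2) n * mAux w (j-1-i) 0 n) = 0 := by
  have h : ∀ i ∈ Finset.range j, (w n * w (n-1) * mAux w i 0 n * mAux w (j-1-i) 2 (n-2)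
      - mAux w i (-2) n * mAux w (j-1-i) 0 n)
      = mAux w i 0 n * mAux w (j-1-i) (-2) n - mAux w i (-2) n * mAux w (j-1-i) 0 n := by
    intro i _
    rw [mAux_d1 w (j-1-i) n]
    ring
  rw [Finset.sum_congr rfl h, Finset.sum_sub_distrib, sub_eq_zero]
  rw [← Finset.sum_range_reflect (fun i => mAux w i 0 n * mAux w (j-1-i) (-2) n) j]
  apply Finset.sum_congr rfl
  intro i hi
  simp only [Finset.mem_range] at hi
  rw [show j - 1 - (j - 1 - i) = i from by omega]
  ring
end

section
variable {R : Type*} [CommRing R] (w : ℤ → R)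

lemma mAux_det (j : ℕ) : ∀ d : ℤ, 1 ≤ d → ∀ n : ℤ,
    mAux w j (-(2*d)) n = ∑ i ∈ Finset.range j,
      (w n * w (n-1) * mAux w i 0 n * mAux w (j-1-i) (-(2*d)+2) (n-2) -
       mAux w i (-2) n * mAux w (j-1-i) (-(2*d)) n) := by
  induction j with
  | zero =>
      intro d hd n
      simp [mAux, show ¬(-(2*d) = 0) from by omega]
  | succ j ih =>
      intro d hd n
      rw [Finset.sum_range_succ]
      simp only [Nat.add_sub_cancel]
      rw [show j - j = 0 from Nat.sub_self j]
      rcases eq_or_lt_of_le hd with rfl | hd2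
      · have key : ∀ i ∈ Finset.range j,
            (w n * w (n-1) * mAux w i 0 n * mAux w (j - i) (-(2*1)+2) (n-2) -
              mAux w i (-2) n * mAux w (j - i) (-(2*1)) n)
            = (w n * w (n-1) * mAux w i 0 n * mAux w (j-1-i) (-(2*2)+2) (n-2) -
                mAux w i (-2) n * mAux w (j-1-i) (-(2*2)) n)
              + (w (n - 1) + w (n - 2)) *
                (w n * w (n-1) * mAux w i 0 n * mAux w (j-1-i) (-(2*1)+2) (n-2) -
                  mAux w i (-2) n * mAux w (j-1-i) (-(2*1)) n)
              + (w n * w (n - 1)) *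
                (w n * w (n-1) * mAux w i 0 n * mAux w (j-1-i) 2 (n-2) -
                  mAux w i (-2) n * mAux w (j-1-i) 0 n) := by
          intro i hi
          simp only [Finset.mem_range] at hi
          rw [show j - i = (j-1-i)+1 from by omega]
          rw [mAux_succ w (j-1-i) (-(2*1)+2) (n-2), mAux_succ w (j-1-i) (-(2*1)) n]
          ring_nf
        rw [Finset.sum_congr rfl key, Finset.sum_add_distrib, Finset.sum_add_distrib,
          ← Finset.mul_sum, ← Finset.mul_sum,
          ← ih 2 (by omega) n, ← ih 1 (by omega) n, refl0 w j n]
        rw [mAux_succ w j (-(2*1)) n]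
        have hp1 : mAux w 0 (-(2*1)+2) (n-2) = 1 := by norm_num [mAux]
        have hp2 : mAux w 0 (-(2*1)) n = 0 := by norm_num [mAux]
        rw [hp1, hp2]
        ring_nf
      · -- 1 < d
        have key : ∀ i ∈ Finset.range j,
            (w n * w (n-1) * mAux w i 0 n * mAux w (j - i) (-(2*d)+2) (n-2) -
              mAux w i (-2) n * mAux w (j - i) (-(2*d)) n)
            = (w n * w (n-1) * mAux w i 0 n * mAux w (j-1-i) (-(2*(d+1))+2) (n-2) -
                mAux w i (-2) n * mAux w (j-1-i) (-(2*(d+1))) n)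
              + (w (n - 2*d + 1) + w (n - 2*d)) *
                (w n * w (n-1) * mAux w i 0 n * mAux w (j-1-i) (-(2*d)+2) (n-2) -
                  mAux w i (-2) n * mAux w (j-1-i) (-(2*d)) n)
              + (w (n - 2*d + 2) * w (n - 2*d + 1)) *
                (w n * w (n-1) * mAux w i 0 n * mAux w (j-1-i) (-(2*(d-1))+2) (n-2) -
                  mAux w i (-2) n * mAux w (j-1-i) (-(2*(d-1))) n) := by
          intro i hi
          simp only [Finset.mem_range] at hi
          rw [show j - i = (j-1-i)+1 from by omega]
          rw [mAux_succ w (j-1-i) (-(2*d)+2) (n-2), mAux_succ w (j-1-i) (-(2*d)) n]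
          ring_nf
        rw [Finset.sum_congr rfl key, Finset.sum_add_distrib, Finset.sum_add_distrib,
          ← Finset.mul_sum, ← Finset.mul_sum,
          ← ih (d+1) (by omega) n, ← ih d hd n, ← ih (d-1) (by omega) n]
        rw [mAux_succ w j (-(2*d)) n]
        have hz1 : mAux w 0 (-(2*d)+2) (n-2) = 0 := by
          simp [mAux]; omega
        have hz2 : mAux w 0 (-(2*d)) n = 0 := by
          simp [mAux]; omega
        rw [hz1, hz2]
        ring_nf
end


open Finset in
theorem det_resolvent_vanishes (R : Type*) [CommRing R] (w : ℤ → R) (j : ℤ) (hj : 1 ≤ j)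
    (n : ℤ) :
    mCoef w j (-2) n =
      ∑ i ∈ Finset.Icc (0 : ℤ) (j - 1),
        (w n * w (n - 1) * mCoef w i 0 n * mCoef w (j - 1 - i) 0 (n - 2) -
          mCoef w i (-2) n * mCoef w (j - 1 - i) (-2) n) := by
  have key := mAux_det w j.toNat 1 le_rfl n
  norm_num at key
  have hset : Finset.Icc (0:ℤ) (j-1)
      = Finset.map ⟨(Nat.cast : ℕ → ℤ), Nat.cast_injective⟩ (Finset.range j.toNat) := by
    ext x
    simp only [Finset.mem_Icc, Finset.mem_map, Finset.mem_range, Function.Embedding.coeFn_mk]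
    constructor
    · rintro ⟨h1, h2⟩
      exact ⟨x.toNat, by omega, by omega⟩
    · rintro ⟨a, ha, rfl⟩
      omega
  rw [hset, Finset.sum_map]
  show mAux w j.toNat (-2) n = _
  rw [key, ← Finset.sum_sub_distrib]
  apply Finset.sum_congr rfl
  intro i hi
  simp only [Finset.mem_range] at hi
  simp only [Function.Embedding.coeFn_mk, mCoef, Int.toNat_natCast]
  rw [show (j - 1 - (i:ℤ)).toNat = j.toNat - 1 - i from by omega]
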